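/- The Fresnel integrals C(x) = ∫_0^x cos(πt²/2) dt and S(x) = ∫_0^x sin(πt²/2) dt both converge to 1/2 as x → +∞. -/

import Mathlib

open Real Filter MeasureTheory intervalIntegral Complex Set

noncomputable section

lemma fresnel_aux_bound {w : ℂ} (hre : 0 ≤ w.re) (hw : Real.pi / 2 ≤ ‖w‖)
    {a b : ℝ} (ha : 0 < a) (hab : a ≤ b) :
    ‖∫ t in a..b, Complex.exp (-w * (t:ℂ)^2)‖ ≤ 2 / (Real.pi * a) := by
  have hw0 : w ≠ 0 := by
    intro h
    rw [h, norm_zero] at hw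
    linarith [Real.pi_pos]
  have hwn : (0:ℝ) < ‖w‖ := lt_of_lt_of_le (by positivity) hw
  have hmem : ∀ t ∈ Set.uIcc a b, (0:ℝ) < t := by
    intro t ht
    rw [Set.uIcc_of_le hab] at ht
    linarith [ht.1]
  set u : ℝ → ℂ := fun t => (-2 * w * (t:ℂ))⁻¹ with hu_def
  set v : ℝ → ℂ := fun t => Complex.exp (-w * (t:ℂ)^2) with hv_def
  set u' : ℝ → ℂ := fun t => (2 * w * (t:ℂ)^2)⁻¹ with hu'_def
  set v' : ℝ → ℂ := fun t => (-2 * w * (t:ℂ)) * Complex.exp (-w * (t:ℂ)^2) with hv'_def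
  have hne : ∀ t ∈ Set.uIcc a b, -2 * w * (t:ℂ) ≠ 0 := by
    intro t ht
    have ht0 : (t:ℂ) ≠ 0 := by exact_mod_cast (hmem t ht).ne'
    simp [hw0, ht0]
  have hu : ∀ t ∈ Set.uIcc a b, HasDerivAt u (u' t) t := by
    intro t ht
    have ht0 : (t:ℂ) ≠ 0 := by exact_mod_cast (hmem t ht).ne'
    have h0 : HasDerivAt (fun z : ℂ => -2 * w * z) (-2 * w) (t:ℂ) := by
      simpa using (hasDerivAt_id (t:ℂ)).const_mul (-2*w)
    have h2 := (h0.inv (hne t ht)).comp_ofReal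
    have : -(-2*w) / (-2 * w * (t:ℂ))^2 = (2 * w * (t:ℂ)^2)⁻¹ := by
      field_simp
    rw [this] at h2
    exact h2
  have hv : ∀ t ∈ Set.uIcc a b, HasDerivAt v (v' t) t := by
    intro t ht
    have hin : HasDerivAt (fun z : ℂ => -w * z^2) (-2 * w * (t:ℂ)) (t:ℂ) := by
      have := (hasDerivAt_pow 2 ((t:ℂ))).const_mul (-w)
      refine this.congr_deriv ?_
      ring
    have h2 := hin.cexp.comp_ofReal
    simp only [hv_def, hv'_def]
    convert h2 using 1
    ring
  have hcont_u' : ContinuousOn u' (Set.uIcc a b) := by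
    apply ContinuousOn.inv₀
    · fun_prop
    · intro t ht
      have ht0 : (t:ℂ) ≠ 0 := by exact_mod_cast (hmem t ht).ne'
      simp [hw0, ht0]
  have hcont_v : Continuous v := by fun_prop
  have hcont_v' : Continuous v' := by fun_prop
  have hiu' : IntervalIntegrable u' volume a b := hcont_u'.intervalIntegrable
  have hiv' : IntervalIntegrable v' volume a b := hcont_v'.intervalIntegrable a b
  have hparts := intervalIntegral.integral_mul_deriv_eq_deriv_mul hu hv hiu' hiv'
  have hcongr : ∫ t in a..b, Complex.exp (-w * (t:ℂ)^2) = ∫ t in a..b, u t * v' t := by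
    apply intervalIntegral.integral_congr
    intro t ht
    simp only [hu_def, hv'_def]
    rw [← mul_assoc, inv_mul_cancel₀ (hne t ht), one_mul]
  rw [hcongr, hparts]
  have hnormv : ∀ t : ℝ, ‖v t‖ ≤ 1 := by
    intro t
    simp only [hv_def]
    rw [Complex.norm_exp, Real.exp_le_one_iff]
    have h9 : (-w * (t:ℂ)^2) = -w * ((t^2 : ℝ) : ℂ) := by push_cast; ring
    rw [h9]
    simp only [Complex.mul_re, Complex.neg_re, Complex.neg_im, Complex.ofReal_re,
      Complex.ofReal_im, mul_zero, sub_zero]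
    nlinarith [sq_nonneg t]
  have hnormu : ∀ t : ℝ, 0 < t → ‖u t‖ = 1 / (2 * ‖w‖ * t) := by
    intro t ht
    simp only [hu_def]
    rw [norm_inv]
    rw [norm_mul, norm_mul]
    simp [Complex.norm_real, abs_of_pos ht, Real.norm_eq_abs]
  -- the integral of ‖u' t * v t‖ bound
  have ha' : (0:ℝ) < b := lt_of_lt_of_le ha hab
  have hic : IntervalIntegrable (fun t : ℝ => (2 * ‖w‖)⁻¹ * (t^2)⁻¹) volume a b := by
    apply ContinuousOn.intervalIntegrable
    apply ContinuousOn.mul continuousOn_const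
    apply ContinuousOn.inv₀ (by fun_prop)
    intro t ht
    exact pow_ne_zero 2 (hmem t ht).ne'
  have hint : ∫ t in a..b, (2 * ‖w‖)⁻¹ * (t^2)⁻¹ = (2*‖w‖)⁻¹ * (1/a - 1/b) := by
    have hd : ∀ t ∈ Set.uIcc a b, HasDerivAt (fun s : ℝ => -((2*‖w‖)⁻¹ * s⁻¹)) ((2 * ‖w‖)⁻¹ * (t^2)⁻¹) t := by
      intro t ht
      have ht0 : t ≠ 0 := (hmem t ht).ne'
      have := ((hasDerivAt_inv ht0).const_mul ((2*‖w‖)⁻¹)).neg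
      refine this.congr_deriv ?_
      ring
    rw [intervalIntegral.integral_eq_sub_of_hasDerivAt hd hic]
    rw [one_div, one_div]; ring
  have hintnorm : ‖∫ t in a..b, u' t * v t‖ ≤ (2*‖w‖)⁻¹ * (1/a - 1/b) := by
    have h8 := intervalIntegral.norm_integral_le_abs_of_norm_le (μ := volume)
      (f := fun t => u' t * v t) (g := fun t : ℝ => (2 * ‖w‖)⁻¹ * (t^2)⁻¹)
      (a := a) (b := b) ?_ hic
    · rw [hint] at h8
      refine le_trans h8 (le_of_eq (abs_of_nonneg ?_))
      have h1a : 1/b ≤ 1/a := one_div_le_one_div_of_le ha hab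
      have : (0:ℝ) ≤ (2*‖w‖)⁻¹ := by positivity
      nlinarith
    · filter_upwards [MeasureTheory.ae_restrict_mem measurableSet_uIoc] with t ht
      rw [Set.uIoc_of_le hab] at ht
      have ht0 : (0:ℝ) < t := lt_of_lt_of_le ha (le_of_lt ht.1)
      rw [norm_mul]
      calc ‖u' t‖ * ‖v t‖ ≤ ‖u' t‖ * 1 := by
            apply mul_le_mul_of_nonneg_left (hnormv t) (norm_nonneg _)
        _ = (2 * ‖w‖)⁻¹ * (t^2)⁻¹ := by
            rw [mul_one]
            simp only [hu'_def]
            rw [norm_inv, norm_mul, norm_mul, mul_inv]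
            norm_num
  -- final assembly
  have h1 : ‖u b * v b‖ ≤ (2*‖w‖)⁻¹ * (1/b) := by
    rw [norm_mul, hnormu b ha']
    calc 1/(2*‖w‖*b) * ‖v b‖ ≤ 1/(2*‖w‖*b) * 1 := by
          apply mul_le_mul_of_nonneg_left (hnormv b) (by positivity)
      _ = (2*‖w‖)⁻¹ * (1/b) := by field_simp
  have h2 : ‖u a * v a‖ ≤ (2*‖w‖)⁻¹ * (1/a) := by
    rw [norm_mul, hnormu a ha]
    calc 1/(2*‖w‖*a) * ‖v a‖ ≤ 1/(2*‖w‖*a) * 1 := by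
          apply mul_le_mul_of_nonneg_left (hnormv a) (by positivity)
      _ = (2*‖w‖)⁻¹ * (1/a) := by field_simp
  have htri : ‖u b * v b - u a * v a - ∫ t in a..b, u' t * v t‖ ≤
      ‖u b * v b‖ + ‖u a * v a‖ + ‖∫ t in a..b, u' t * v t‖ := by
    calc ‖u b * v b - u a * v a - ∫ t in a..b, u' t * v t‖
        ≤ ‖u b * v b - u a * v a‖ + ‖∫ t in a..b, u' t * v t‖ := norm_sub_le _ _
      _ ≤ ‖u b * v b‖ + ‖u a * v a‖ + ‖∫ t in a..b, u' t * v t‖ := by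
          have := norm_sub_le (u b * v b) (u a * v a)
          linarith
  have hb1 : 1/b ≤ 1/a := one_div_le_one_div_of_le ha hab
  have hfin : ‖u b * v b - u a * v a - ∫ t in a..b, u' t * v t‖ ≤ (2*‖w‖)⁻¹ * (2/a) := by
    have hnn : (0:ℝ) ≤ (2*‖w‖)⁻¹ := by positivity
    have h2a : (2:ℝ)/a = 1/a + 1/b + (1/a - 1/b) := by ring
    rw [h2a, mul_add, mul_add]
    linarith
  refine le_trans hfin ?_
  have hπ : Real.pi ≤ 2 * ‖w‖ := by linarith
  rw [inv_mul_eq_div, div_le_div_iff₀ (by positivity) (by positivity)]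
  have e : 2/a*(Real.pi*a) = 2*Real.pi := by field_simp
  rw [e]
  nlinarith [Real.pi_pos]


-- the fixed purely imaginary coefficient
local notation "w₀" => ((Real.pi/2 : ℝ) * Complex.I)

lemma fresnel_w0_norm : ‖((Real.pi/2 : ℝ) * Complex.I)‖ = Real.pi/2 := by
  rw [norm_mul, Complex.norm_real, Complex.norm_I, mul_one, Real.norm_eq_abs,
    abs_of_pos (by positivity)]

lemma fresnel_w0_re : ((Real.pi/2 : ℝ) * Complex.I).re = 0 := by simp

lemma fresnel_cont (b : ℂ) : Continuous (fun t : ℝ => Complex.exp (-b * (t:ℂ)^2)) := by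
  fun_prop

lemma fresnel_integrable (b : ℂ) (x y : ℝ) :
    IntervalIntegrable (fun t : ℝ => Complex.exp (-b * (t:ℂ)^2)) volume x y :=
  (fresnel_cont b).intervalIntegrable x y

/-- the partial Fresnel integral -/
noncomputable def fresnelG (x : ℝ) : ℂ := ∫ t in (0:ℝ)..x, Complex.exp (-((Real.pi/2 : ℝ) * Complex.I) * (t:ℂ)^2)

lemma fresnelG_sub (x y : ℝ) :
    fresnelG y - fresnelG x = ∫ t in x..y, Complex.exp (-((Real.pi/2 : ℝ) * Complex.I) * (t:ℂ)^2) := by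
  rw [fresnelG, fresnelG, ← intervalIntegral.integral_add_adjacent_intervals
    (fresnel_integrable _ 0 x) (fresnel_integrable _ x y)]
  ring

lemma fresnelG_bound {x y : ℝ} (hx : 0 < x) (hxy : x ≤ y) :
    ‖fresnelG y - fresnelG x‖ ≤ 2 / (Real.pi * x) := by
  rw [fresnelG_sub]
  exact fresnel_aux_bound (le_of_eq fresnel_w0_re.symm) (le_of_eq fresnel_w0_norm.symm) hx hxy

lemma fresnelG_cauchy : ∃ L : ℂ, Tendsto fresnelG atTop (nhds L) := by
  apply cauchySeq_tendsto_of_complete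
  rw [Metric.cauchySeq_iff']
  intro ε hε
  refine ⟨2/(Real.pi * ε) + 1, fun n hn => ?_⟩
  have hNpos : (0:ℝ) < 2/(Real.pi * ε) + 1 := by positivity
  rw [dist_eq_norm]
  calc ‖fresnelG n - fresnelG (2/(Real.pi * ε) + 1)‖ ≤ 2 / (Real.pi * (2/(Real.pi * ε) + 1)) :=
        fresnelG_bound hNpos hn
    _ < ε := by
        rw [div_lt_iff₀ (by positivity)]
        have h1 : Real.pi * (2/(Real.pi*ε)) = 2/ε := by
          field_simp
        have : ε * (Real.pi * (2/(Real.pi * ε) + 1)) = 2 + ε * Real.pi := by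
          rw [mul_add, h1]
          field_simp
        nlinarith [Real.pi_pos]

/-- tail bound for the damped integral -/
lemma fresnel_tail_bound {ε : ℝ} (hε : 0 < ε) {x : ℝ} (hx : 0 < x) :
    ‖∫ t in Ioi x, Complex.exp (-((ε:ℂ) + (Real.pi/2 : ℝ) * Complex.I) * (t:ℂ)^2)‖
      ≤ 2 / (Real.pi * x) := by
  set b : ℂ := (ε:ℂ) + (Real.pi/2 : ℝ) * Complex.I with hb
  have hbre : 0 < b.re := by simp [hb, hε]
  have hint : IntegrableOn (fun t : ℝ => Complex.exp (-b * (t:ℂ)^2)) (Ioi x) volume := by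
    apply (integrable_cexp_neg_mul_sq hbre).integrableOn
  have htends := intervalIntegral_tendsto_integral_Ioi x hint (tendsto_id : Tendsto id atTop atTop)
  have hbnorm : Real.pi/2 ≤ ‖b‖ := by
    have : Real.pi/2 = |b.im| := by simp [hb]; rw [abs_of_pos (by positivity)]
    rw [this]
    exact Complex.abs_im_le_norm b
  have hbre' : 0 ≤ b.re := le_of_lt hbre
  apply le_of_tendsto (htends.norm)
  filter_upwards [eventually_ge_atTop x] with y hy
  exact fresnel_aux_bound hbre' hbnorm hx hy

/-- difference bound on [0,x] -/
lemma fresnel_diff_bound {ε : ℝ} (hε : 0 < ε) {x : ℝ} (hx : 0 ≤ x) :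
    ‖(∫ t in (0:ℝ)..x, Complex.exp (-((ε:ℂ) + (Real.pi/2 : ℝ) * Complex.I) * (t:ℂ)^2)) - fresnelG x‖
      ≤ ε * x^3 := by
  set b : ℂ := (ε:ℂ) + (Real.pi/2 : ℝ) * Complex.I with hb
  rw [fresnelG, ← intervalIntegral.integral_sub (fresnel_integrable b 0 x) (fresnel_integrable _ 0 x)]
  have hptw : ∀ t ∈ Set.uIoc (0:ℝ) x, ‖Complex.exp (-b * (t:ℂ)^2) - Complex.exp (-((Real.pi/2 : ℝ) * Complex.I) * (t:ℂ)^2)‖ ≤ ε * t^2 := by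
    intro t ht
    have key : Complex.exp (-b * (t:ℂ)^2) - Complex.exp (-((Real.pi/2 : ℝ) * Complex.I) * (t:ℂ)^2)
        = Complex.exp (-((Real.pi/2 : ℝ) * Complex.I) * (t:ℂ)^2) * (Complex.exp (-(ε:ℂ) * (t:ℂ)^2) - 1) := by
      rw [mul_sub, ← Complex.exp_add, mul_one]
      congr 2
      rw [hb]; ring
    rw [key, norm_mul]
    have h1 : ‖Complex.exp (-((Real.pi/2 : ℝ) * Complex.I) * (t:ℂ)^2)‖ = 1 := by
      rw [Complex.norm_exp]
      have hre0 : (-((Real.pi/2 : ℝ) * Complex.I) * (t:ℂ)^2).re = 0 := by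
        have h9 : -((Real.pi/2 : ℝ) * Complex.I) * (t:ℂ)^2 = ((-(Real.pi/2 * t^2) : ℝ):ℂ) * Complex.I := by
          push_cast; ring
        rw [h9, Complex.mul_re]
        simp [Complex.ofReal_im]
        rw [show ((t:ℂ)^2) = ((t^2:ℝ):ℂ) by push_cast; ring]
        exact Complex.ofReal_im _
      rw [hre0, Real.exp_zero]
    rw [h1, one_mul]
    have h2 : Complex.exp (-(ε:ℂ) * (t:ℂ)^2) = ((Real.exp (-(ε * t^2)) : ℝ) : ℂ) := by
      rw [Complex.ofReal_exp]
      congr 1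
      push_cast
      ring
    have hle : Real.exp (-(ε * t^2)) ≤ 1 := by
      rw [Real.exp_le_one_iff]
      nlinarith [sq_nonneg t]
    rw [h2, ← Complex.ofReal_one, ← Complex.ofReal_sub, Complex.norm_real, Real.norm_eq_abs,
      _root_.abs_of_nonpos (by linarith)]
    have := Real.add_one_le_exp (-(ε * t^2))
    linarith
  have hicm : IntervalIntegrable (fun t : ℝ => ε * t^2) volume 0 x :=
    (continuous_const.mul (continuous_pow 2)).intervalIntegrable 0 x
  have h8 := intervalIntegral.norm_integral_le_abs_of_norm_le (μ := volume) (a := (0:ℝ)) (b := x)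
    (f := fun t => Complex.exp (-b * (t:ℂ)^2) - Complex.exp (-((Real.pi/2 : ℝ) * Complex.I) * (t:ℂ)^2))
    (g := fun t : ℝ => ε * t^2) ?_ hicm
  · have hxn : (0:ℝ) ≤ x^3 := pow_nonneg hx 3
    have hval : (∫ t in (0:ℝ)..x, ε * t^2) = ε * x^3 / 3 := by
      rw [intervalIntegral.integral_const_mul, integral_pow]
      norm_num
      ring
    refine le_trans h8 ?_
    rw [hval, _root_.abs_of_nonneg (by nlinarith)]
    nlinarith
  · filter_upwards [MeasureTheory.ae_restrict_mem measurableSet_uIoc] with t ht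
    exact hptw t ht

lemma fresnel_pi_div_w0 : (Real.pi : ℂ) / ((Real.pi/2 : ℝ) * Complex.I) = -2 * Complex.I := by
  have hzne : ((Real.pi/2 : ℝ) : ℂ) * Complex.I ≠ 0 := by
    simp [Complex.I_ne_zero, Real.pi_ne_zero]
  rw [div_eq_iff hzne]
  push_cast
  linear_combination (Real.pi : ℂ) * Complex.I_mul_I

lemma fresnel_sqrt_value : ((-2:ℂ) * Complex.I) ^ ((1:ℂ)/2) = 1 - Complex.I := by
  have h0 : ((-2:ℂ) * Complex.I) ≠ 0 := by simp [Complex.I_ne_zero]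
  rw [Complex.cpow_def_of_ne_zero h0]
  have habs : ‖(-2:ℂ)*Complex.I‖ = 2 := by simp
  have harg : Complex.arg ((-2:ℂ)*Complex.I) = -(Real.pi/2) := by
    have h3 : ((-2:ℂ)*Complex.I) = ((2:ℝ):ℂ) * (-Complex.I) := by push_cast; ring
    rw [h3, Complex.arg_real_mul _ (by norm_num : (0:ℝ) < 2), Complex.arg_neg_I]
  have hlog : Complex.log ((-2:ℂ)*Complex.I) = ((Real.log 2 : ℝ) : ℂ) - ((Real.pi/2 : ℝ):ℂ)*Complex.I := by
    apply Complex.ext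
    · rw [Complex.log_re, habs]
      simp only [Complex.sub_re, Complex.ofReal_re, Complex.mul_re, Complex.ofReal_im,
        Complex.I_re, Complex.I_im]
      norm_num
    · rw [Complex.log_im, harg]
      simp only [Complex.sub_im, Complex.ofReal_im, Complex.mul_im, Complex.ofReal_re,
        Complex.I_re, Complex.I_im]
      norm_num
  have hmul : (((Real.log 2 : ℝ) : ℂ) - ((Real.pi/2 : ℝ):ℂ)*Complex.I) * ((1:ℂ)/2)
      = ((Real.log 2/2 : ℝ) : ℂ) + ((-(Real.pi/4) : ℝ):ℂ) * Complex.I := by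
    push_cast; ring
  rw [hlog, hmul, Complex.exp_add, Complex.exp_mul_I]
  rw [← Complex.ofReal_exp, ← Complex.ofReal_cos, ← Complex.ofReal_sin]
  have he : Real.exp (Real.log 2 / 2) = Real.sqrt 2 := by
    rw [← Real.log_sqrt (by norm_num : (0:ℝ) ≤ 2), Real.exp_log (by positivity)]
  have hc : Real.cos (-(Real.pi/4)) = Real.sqrt 2 / 2 := by
    rw [Real.cos_neg, Real.cos_pi_div_four]
  have hsn : Real.sin (-(Real.pi/4)) = -(Real.sqrt 2 / 2) := by
    rw [Real.sin_neg, Real.sin_pi_div_four]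
  rw [he, hc, hsn]
  have hs : ((Real.sqrt 2 : ℝ) : ℂ) * ((Real.sqrt 2 : ℝ) : ℂ) = 2 := by
    norm_cast
    exact Real.mul_self_sqrt (by norm_num)
  push_cast
  linear_combination ((1 - Complex.I)/2) * hs

lemma fresnel_value_tendsto :
    Tendsto (fun ε : ℝ => ((Real.pi:ℂ) / ((ε:ℂ) + (Real.pi/2 : ℝ) * Complex.I)) ^ ((1:ℂ)/2) / 2)
      (nhdsWithin 0 (Ioi 0)) (nhds ((1 - Complex.I)/2)) := by
  have hzne : ((Real.pi/2 : ℝ) : ℂ) * Complex.I ≠ 0 := by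
    simp [Complex.I_ne_zero, Real.pi_ne_zero]
  have h1 : Tendsto (fun ε : ℝ => (ε:ℂ) + (Real.pi/2 : ℝ) * Complex.I)
      (nhdsWithin 0 (Ioi 0)) (nhds ((Real.pi/2 : ℝ) * Complex.I)) := by
    have h0 : Tendsto (fun ε : ℝ => (ε:ℂ)) (nhdsWithin 0 (Ioi 0)) (nhds 0) := by
      have := (Complex.continuous_ofReal.tendsto 0).mono_left
        (nhdsWithin_le_nhds (s := Ioi (0:ℝ)))
      simpa using this
    have := h0.add (tendsto_const_nhds (x := ((Real.pi/2 : ℝ) : ℂ) * Complex.I))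
    simpa using this
  have h2 : ContinuousAt (fun z : ℂ => ((Real.pi:ℂ)/z)^((1:ℂ)/2)/2) (((Real.pi/2 : ℝ)) * Complex.I) := by
    have hdiv : ContinuousAt (fun z : ℂ => (Real.pi:ℂ)/z) (((Real.pi/2 : ℝ)) * Complex.I) :=
      continuousAt_const.div continuousAt_id hzne
    have hcp : ContinuousAt (fun y : ℂ => y ^ ((1:ℂ)/2)) ((Real.pi:ℂ)/(((Real.pi/2 : ℝ)) * Complex.I)) := by
      rw [fresnel_pi_div_w0]
      exact continuousAt_cpow_const (by rw [Complex.mem_slitPlane_iff]; right; simp)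
    exact (hcp.comp hdiv).div_const 2
  have h3 := h2.tendsto.comp h1
  have h4 : ((Real.pi:ℂ)/(((Real.pi/2 : ℝ)) * Complex.I))^((1:ℂ)/2)/2 = (1 - Complex.I)/2 := by
    rw [fresnel_pi_div_w0, fresnel_sqrt_value]
  rw [h4] at h3
  exact h3

lemma fresnelG_tendsto : Tendsto fresnelG atTop (nhds ((1 - Complex.I)/2)) := by
  obtain ⟨L, hL⟩ := fresnelG_cauchy
  suffices hLv : L = (1 - Complex.I)/2 by rwa [hLv] at hL
  have key : ∀ δ : ℝ, 0 < δ → dist L ((1 - Complex.I)/2) ≤ δ := by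
    intro δ hδ
    set x : ℝ := max 1 (10/(Real.pi * δ)) with hx_def
    have hxpos : (0:ℝ) < x := lt_of_lt_of_le one_pos (le_max_left _ _)
    have hxbig : 10/(Real.pi * δ) ≤ x := le_max_right _ _
    have hxb : 2/(Real.pi * x) ≤ δ/5 := by
      rw [div_le_div_iff₀ (by positivity) (by norm_num)]
      have h10 : 10/(Real.pi*δ) * (Real.pi * δ) = 10 := by field_simp
      have := mul_le_mul_of_nonneg_right hxbig (by positivity : (0:ℝ) ≤ Real.pi * δ)
      rw [h10] at this
      nlinarith [Real.pi_pos]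
    -- bound ‖L - fresnelG x‖
    have hLx : ‖L - fresnelG x‖ ≤ 2/(Real.pi * x) := by
      have ht : Tendsto (fun y => ‖fresnelG y - fresnelG x‖) atTop (nhds ‖L - fresnelG x‖) := by
        exact ((hL.sub tendsto_const_nhds).norm)
      apply le_of_tendsto ht
      filter_upwards [eventually_ge_atTop x] with y hy
      exact fresnelG_bound hxpos hy
    -- choose ε
    have hev1 : ∀ᶠ ε : ℝ in nhdsWithin 0 (Ioi 0),
        ‖((Real.pi:ℂ) / ((ε:ℂ) + (Real.pi/2 : ℝ) * Complex.I)) ^ ((1:ℂ)/2) / 2 - (1 - Complex.I)/2‖ ≤ δ/5 := by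
      have h := Metric.tendsto_nhds.mp fresnel_value_tendsto (δ/5) (by positivity)
      filter_upwards [h] with ε hε
      rw [dist_eq_norm] at hε
      exact le_of_lt hε
    have hev2 : ∀ᶠ ε : ℝ in nhdsWithin 0 (Ioi 0), ε * x^3 ≤ δ/5 := by
      have hc : Tendsto (fun ε : ℝ => ε * x^3) (nhdsWithin 0 (Ioi 0)) (nhds 0) := by
        have h7 : Tendsto (fun ε : ℝ => ε * x^3) (nhds 0) (nhds (0 * x^3)) :=
          (continuous_mul_right (x^3)).tendsto 0
        rw [zero_mul] at h7
        exact h7.mono_left nhdsWithin_le_nhds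
      have h := Metric.tendsto_nhds.mp hc (δ/5) (by positivity)
      filter_upwards [h] with ε hε
      rw [Real.dist_eq, sub_zero] at hε
      exact le_of_lt (lt_of_le_of_lt (le_abs_self _) hε)
    have hev3 : ∀ᶠ ε : ℝ in nhdsWithin 0 (Ioi 0), (0:ℝ) < ε :=
      eventually_mem_nhdsWithin
    obtain ⟨ε, hε1, hε2, hε3⟩ := (hev1.and (hev2.and hev3)).exists
    set b : ℂ := (ε:ℂ) + (Real.pi/2 : ℝ) * Complex.I with hb_def
    have hbre : 0 < b.re := by simp [hb_def, hε3]
    set J : ℂ := ∫ t in (0:ℝ)..x, Complex.exp (-b * (t:ℂ)^2) with hJ_def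
    set V : ℂ := ∫ t in Ioi (0:ℝ), Complex.exp (-b * (t:ℂ)^2) with hV_def
    have hio : IntegrableOn (fun t:ℝ => Complex.exp (-b*(t:ℂ)^2)) (Ioi 0) volume :=
      (integrable_cexp_neg_mul_sq hbre).integrableOn
    have hsplit : V = J + ∫ t in Ioi x, Complex.exp (-b * (t:ℂ)^2) := by
      rw [hV_def, hJ_def, ← Set.Ioc_union_Ioi_eq_Ioi (le_of_lt hxpos),
        MeasureTheory.setIntegral_union (Set.Ioc_disjoint_Ioi le_rfl) measurableSet_Ioi
          (hio.mono_set (by intro t ht; exact ht.1)) (hio.mono_set (by intro t ht; exact lt_trans hxpos ht)),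
        intervalIntegral.integral_of_le (le_of_lt hxpos)]
    have hd1 : ‖L - fresnelG x‖ ≤ δ/5 := le_trans hLx hxb
    have hd2 : ‖fresnelG x - J‖ ≤ δ/5 := by
      rw [← norm_neg, neg_sub]
      exact le_trans (fresnel_diff_bound hε3 (le_of_lt hxpos)) hε2
    have hd3 : ‖J - V‖ ≤ δ/5 := by
      rw [hsplit]
      have : J - (J + ∫ t in Ioi x, Complex.exp (-b * (t:ℂ)^2)) = -(∫ t in Ioi x, Complex.exp (-b * (t:ℂ)^2)) := by ring
      rw [this, norm_neg]
      exact le_trans (fresnel_tail_bound hε3 hxpos) hxb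
    have hd4 : ‖V - (1 - Complex.I)/2‖ ≤ δ/5 := by
      rw [hV_def]
      rw [show (fun t : ℝ => Complex.exp (-b*(t:ℂ)^2)) = (fun t : ℝ => Complex.exp (-b*(t:ℂ)^2)) from rfl]
      rw [integral_gaussian_complex_Ioi hbre]
      exact hε1
    rw [dist_eq_norm]
    calc ‖L - (1 - Complex.I)/2‖
        = ‖(L - fresnelG x) + (fresnelG x - J) + (J - V) + (V - (1 - Complex.I)/2)‖ := by ring_nf
      _ ≤ ‖L - fresnelG x‖ + ‖fresnelG x - J‖ + ‖J - V‖ + ‖V - (1 - Complex.I)/2‖ := by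
          refine le_trans (norm_add_le _ _) ?_
          refine add_le_add_left (le_trans (norm_add_le _ _) (add_le_add_left (norm_add_le _ _) _)) _
      _ ≤ δ/5 + δ/5 + δ/5 + δ/5 := by
          exact add_le_add (add_le_add (add_le_add hd1 hd2) hd3) hd4
      _ ≤ δ := by linarith
  exact eq_of_forall_dist_le key

lemma fresnelG_eq (x : ℝ) : fresnelG x
    = ((∫ t in (0:ℝ)..x, Real.cos (Real.pi*t^2/2) : ℝ) : ℂ)
      - ((∫ t in (0:ℝ)..x, Real.sin (Real.pi*t^2/2) : ℝ) : ℂ) * Complex.I := by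
  rw [fresnelG]
  have hptw : ∀ t : ℝ, Complex.exp (-((Real.pi/2:ℝ)*Complex.I) * (t:ℂ)^2)
      = ((Real.cos (Real.pi*t^2/2) : ℝ) : ℂ) - ((Real.sin (Real.pi*t^2/2) : ℝ):ℂ) * Complex.I := by
    intro t
    have h1 : -((Real.pi/2:ℝ)*Complex.I) * (t:ℂ)^2 = ((-(Real.pi*t^2/2) : ℝ) : ℂ) * Complex.I := by
      push_cast; ring
    rw [h1, Complex.exp_mul_I, ← Complex.ofReal_cos, ← Complex.ofReal_sin,
      Real.cos_neg, Real.sin_neg]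
    push_cast
    ring
  simp_rw [hptw]
  have hc1 : Continuous fun t : ℝ => ((Real.cos (Real.pi*t^2/2) : ℝ) : ℂ) := by fun_prop
  have hc2 : Continuous fun t : ℝ => ((Real.sin (Real.pi*t^2/2) : ℝ) : ℂ) * Complex.I := by fun_prop
  rw [intervalIntegral.integral_sub (hc1.intervalIntegrable 0 x) (hc2.intervalIntegrable 0 x),
    intervalIntegral.integral_mul_const, intervalIntegral.integral_ofReal,
    intervalIntegral.integral_ofReal]

theorem fresnel_integrals_tendsto_half :
    Tendsto (fun x : ℝ => ∫ t in (0:ℝ)..x, Real.cos (π * t ^ 2 / 2)) atTop (nhds (1/2)) ∧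
    Tendsto (fun x : ℝ => ∫ t in (0:ℝ)..x, Real.sin (π * t ^ 2 / 2)) atTop (nhds (1/2)) := by
  have hg := fresnelG_tendsto
  constructor
  · have h := (Complex.continuous_re.tendsto _).comp hg
    have he : (fun x : ℝ => (fresnelG x).re) = fun x : ℝ => ∫ t in (0:ℝ)..x, Real.cos (π * t ^ 2 / 2) := by
      funext y
      rw [fresnelG_eq]
      simp
    have hv : ((1 - Complex.I)/2).re = 1/2 := by simp
    rw [← he, ← hv]
    exact h
  · have h := ((Complex.continuous_im.tendsto _).comp hg).neg
    have he : (fun x : ℝ => -(fresnelG x).im) = fun x : ℝ => ∫ t in (0:ℝ)..x, Real.sin (π * t ^ 2 / 2) := by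
      funext y
      rw [fresnelG_eq]
      simp
    have hv : -((1 - Complex.I)/2).im = 1/2 := by norm_num
    rw [← he, ← hv]
    exact h

end
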